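/- For all n ≥ 0, d_2(n) is odd if n = m(3m+1)/2 for some integer m (possibly negative), and even otherwise. -/

import Mathlib

/-- Number of overpartitions of `n` wherein only even parts may be overlined. -/
def d2 (n : ℕ) : ℕ :=
  ∑ m ∈ Finset.range (n + 1),
    Fintype.card (Nat.Partition m) *
      Fintype.card {ν : Nat.Partition (n - m) // ν.parts.Nodup ∧ ∀ x ∈ ν.parts, Even x}

open Finset Multiset PowerSeries

namespace D2P

open scoped Classical

def dec (s : Multiset ℕ) : Multiset ℕ := (s.map (· - 1)).filter (· ≠ 0)
def inc (s : Multiset ℕ) : Multiset ℕ := s.map (· + 1)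

lemma card_le_sum (s : Multiset ℕ) (hs : ∀ x ∈ s, x ≠ 0) : Multiset.card s ≤ s.sum := by
  induction s using Multiset.induction with
  | empty => simp
  | cons a s ih =>
    have ha : a ≠ 0 := hs a (Multiset.mem_cons_self _ _)
    have := ih (fun x hx => hs x (Multiset.mem_cons_of_mem hx))
    simp only [Multiset.card_cons, Multiset.sum_cons]
    omega

lemma dec_inc (s : Multiset ℕ) (hs : ∀ x ∈ s, x ≠ 0) : dec (inc s) = s := by
  unfold dec inc
  rw [Multiset.map_map]
  rw [show ((fun x => x - 1) ∘ (fun x : ℕ => x + 1)) = id by funext x; simp, Multiset.map_id]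
  rw [Multiset.filter_eq_self]
  exact hs

lemma mem_inc_ne_zero {s : Multiset ℕ} {x : ℕ} (hx : x ∈ inc s) : x ≠ 0 := by
  unfold inc at hx
  obtain ⟨a, _, rfl⟩ := Multiset.mem_map.1 hx
  omega

lemma mem_dec {s : Multiset ℕ} {x : ℕ} (hx : x ∈ dec s) : x ≠ 0 := by
  unfold dec at hx
  exact (Multiset.mem_filter.1 hx).2

lemma sum_inc (s : Multiset ℕ) : (inc s).sum = s.sum + Multiset.card s := by
  unfold inc
  induction s using Multiset.induction with
  | empty => simp
  | cons a s ih => simp [ih]; ring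

lemma sum_dec (s : Multiset ℕ) (hs : ∀ x ∈ s, x ≠ 0) :
    (dec s).sum = s.sum - Multiset.card s := by
  unfold dec
  induction s using Multiset.induction with
  | empty => simp
  | cons a s ih =>
    have ha : a ≠ 0 := hs a (Multiset.mem_cons_self _ _)
    have hs' : ∀ x ∈ s, x ≠ 0 := fun x hx => hs x (Multiset.mem_cons_of_mem hx)
    have hle := card_le_sum s hs'
    rw [Multiset.map_cons, Multiset.filter_cons]
    by_cases h : a - 1 = 0
    · simp [h, ih hs']; omega
    · simp [h, ih hs']; omega

lemma dec_add (a b : Multiset ℕ) : dec (a + b) = dec a + dec b := by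
  unfold dec; rw [Multiset.map_add, Multiset.filter_add]

lemma dec_replicate_one (k : ℕ) : dec (Multiset.replicate k 1) = 0 := by
  unfold dec
  rw [Multiset.map_replicate]
  rw [Multiset.filter_eq_nil.2]
  intro a ha
  simp only [Multiset.eq_of_mem_replicate ha]
  simp

lemma inc_add (a b : Multiset ℕ) : inc (a + b) = inc a + inc b := by
  unfold inc; rw [Multiset.map_add]

lemma dec_cons_key (a : ℕ) (s : Multiset ℕ) :
    dec (a ::ₘ s) = (if a - 1 = 0 then 0 else {a - 1}) + dec s := by
  unfold dec
  rw [Multiset.map_cons, Multiset.filter_cons]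
  by_cases h : a - 1 = 0 <;> simp [h, Multiset.singleton_add]

lemma inc_dec (s : Multiset ℕ) (hs : ∀ x ∈ s, x ≠ 0) :
    inc (dec s) = s.filter (2 ≤ ·) := by
  induction s using Multiset.induction with
  | empty => rfl
  | cons a s ih =>
    have ha : a ≠ 0 := hs a (Multiset.mem_cons_self _ _)
    have hs' : ∀ x ∈ s, x ≠ 0 := fun x hx => hs x (Multiset.mem_cons_of_mem hx)
    rw [dec_cons_key, Multiset.filter_cons]
    by_cases h : a - 1 = 0
    · have h2 : ¬ (2 ≤ a) := by omega
      rw [if_pos h, if_neg h2, zero_add, zero_add, ih hs']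
    · have h2 : (2 ≤ a) := by omega
      rw [if_neg h, if_pos h2, inc_add, ih hs']
      congr 1
      unfold inc
      rw [Multiset.map_singleton]
      congr 1
      omega


lemma sup_mem (s : Multiset ℕ) (hs : s ≠ 0) : s.sup ∈ s := by
  induction s using Multiset.induction with
  | empty => exact absurd rfl hs
  | cons a s ih =>
    rw [Multiset.sup_cons]
    rcases eq_or_ne s 0 with rfl | h
    · simp
    · rcases le_total a s.sup with h1 | h1
      · rw [sup_eq_right.2 h1]
        exact Multiset.mem_cons_of_mem (ih h)
      · rw [sup_eq_left.2 h1]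
        exact Multiset.mem_cons_self _ _

-- partitions of n as a finset of multisets
def Pm (n : ℕ) : Finset (Multiset ℕ) :=
  Finset.univ.image (fun p : Nat.Partition n => p.parts)

lemma mem_Pm {n : ℕ} {s : Multiset ℕ} :
    s ∈ Pm n ↔ s.sum = n ∧ ∀ x ∈ s, x ≠ 0 := by
  constructor
  · rintro hs
    obtain ⟨p, _, rfl⟩ := Finset.mem_image.1 hs
    exact ⟨p.parts_sum, fun x hx => (p.parts_pos hx).ne'⟩
  · rintro ⟨h1, h2⟩
    exact Finset.mem_image.2 ⟨⟨s, fun {x} hx => Nat.pos_of_ne_zero (h2 x hx), h1⟩,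
      Finset.mem_univ _, rfl⟩

lemma card_Pm (n : ℕ) : (Pm n).card = Fintype.card (Nat.Partition n) := by
  rw [Pm, Finset.card_image_of_injective _ (fun p q h => Nat.Partition.ext h),
    Finset.card_univ]

def Qm (n : ℕ) : Finset (Multiset ℕ) := (Pm n).filter (fun s => s.Nodup)

lemma mem_Qm {n : ℕ} {s : Multiset ℕ} :
    s ∈ Qm n ↔ s.sum = n ∧ (∀ x ∈ s, x ≠ 0) ∧ s.Nodup := by
  rw [Qm, Finset.mem_filter, mem_Pm]; tauto

-- parts with odd multiplicity
def oddPart (s : Multiset ℕ) : Multiset ℕ :=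
  s.dedup.filter (fun x => s.count x % 2 = 1)

def half (s : Multiset ℕ) : Multiset ℕ :=
  ∑ x ∈ s.toFinset, Multiset.replicate (s.count x / 2) x

lemma count_oddPart (s : Multiset ℕ) (y : ℕ) :
    (oddPart s).count y = s.count y % 2 := by
  rw [oddPart, Multiset.count_filter]
  by_cases h : s.count y % 2 = 1
  · rw [if_pos h, Multiset.count_dedup, if_pos (by rw [← Multiset.count_pos]; omega), h]
  · rw [if_neg h]; omega

lemma count_half (s : Multiset ℕ) (y : ℕ) :
    (half s).count y = s.count y / 2 := by
  rw [half, Multiset.count_sum']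
  by_cases hy : y ∈ s.toFinset
  · rw [Finset.sum_eq_single y (fun b _ hb => by
      rw [Multiset.count_replicate, if_neg hb]) (fun h => absurd hy h)]
    rw [Multiset.count_replicate, if_pos rfl]
  · rw [Finset.sum_eq_zero (fun b hb => by
      rw [Multiset.count_replicate, if_neg (fun h => hy (by rw [← h]; exact hb))])]
    have : s.count y = 0 :=
      Multiset.count_eq_zero.2 (fun h => hy (Multiset.mem_toFinset.2 h))
    omega

lemma nodup_oddPart (s : Multiset ℕ) : (oddPart s).Nodup :=
  (Multiset.nodup_dedup s).filter _

lemma recompose (s : Multiset ℕ) : oddPart s + (half s + half s) = s := by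
  ext y
  simp only [Multiset.count_add, count_oddPart, count_half]
  omega

lemma oddPart_recomp (σ μ : Multiset ℕ) (hσ : σ.Nodup) :
    oddPart (σ + (μ + μ)) = σ := by
  have h1 : ∀ y, σ.count y ≤ 1 := Multiset.nodup_iff_count_le_one.1 hσ
  ext y
  simp only [count_oddPart, Multiset.count_add]
  have := h1 y
  omega

lemma half_recomp (σ μ : Multiset ℕ) (hσ : σ.Nodup) :
    half (σ + (μ + μ)) = μ := by
  have h1 : ∀ y, σ.count y ≤ 1 := Multiset.nodup_iff_count_le_one.1 hσ
  ext y
  simp only [count_half, Multiset.count_add]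
  have := h1 y
  omega

lemma sum_oddPart_add (s : Multiset ℕ) : (oddPart s).sum + 2 * (half s).sum = s.sum := by
  conv_rhs => rw [← recompose s]
  rw [Multiset.sum_add, Multiset.sum_add]
  ring


/-- generalized pentagonal number -/
def gp (j : ℤ) : ℤ := j * (3 * j + 1) / 2

lemma two_dvd_gp_arg (j : ℤ) : 2 ∣ j * (3 * j + 1) := by
  rcases Int.even_or_odd j with ⟨c, hc⟩ | ⟨c, hc⟩
  · exact ⟨c * (3 * j + 1), by rw [hc]; ring⟩
  · exact ⟨j * (3 * c + 2), by rw [hc]; ring⟩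

lemma two_gp (j : ℤ) : 2 * gp j = j * (3 * j + 1) :=
  Int.mul_ediv_cancel' (two_dvd_gp_arg j)

lemma gp_nonneg (j : ℤ) : 0 ≤ gp j := by
  have h := two_gp j
  nlinarith [sq_nonneg j, sq_nonneg (3 * j + 1)]

lemma abs_le_gp (j : ℤ) : |j| ≤ gp j := by
  have h := two_gp j
  rcases abs_cases j with ⟨h1, h2⟩ | ⟨h1, h2⟩
  · rw [h1]; nlinarith [sq_nonneg j]
  · rw [h1]; nlinarith [mul_nonneg (by omega : (0:ℤ) ≤ -j - 1) (by omega : (0:ℤ) ≤ -j)]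

lemma gp_sub_one (j : ℤ) : gp (j - 1) = gp j - 3 * j + 1 := by
  have h1 := two_gp (j - 1)
  have h2 := two_gp j
  have h3 : 2 * gp (j - 1) = 2 * (gp j - 3 * j + 1) := by
    rw [h1]; linear_combination -h2
  omega

lemma gp_add_one (j : ℤ) : gp (j + 1) = gp j + 3 * j + 2 := by
  have h1 := two_gp (j + 1)
  have h2 := two_gp j
  have h3 : 2 * gp (j + 1) = 2 * (gp j + 3 * j + 2) := by
    rw [h1]; linear_combination -h2
  omega

lemma gp_inj {a b : ℤ} (h : gp a = gp b) : a = b := by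
  have h2 : a * (3 * a + 1) = b * (3 * b + 1) := by rw [← two_gp, ← two_gp, h]
  have h3 : (a - b) * (3 * (a + b) + 1) = 0 := by linear_combination h2
  rcases mul_eq_zero.1 h3 with h4 | h4
  · omega
  · omega

lemma gp_zero : gp 0 = 0 := rfl

lemma sup_eq_of {s : Multiset ℕ} {a : ℕ} (h : a ∈ s) (hub : ∀ x ∈ s, x ≤ a) :
    s.sup = a :=
  le_antisymm (Multiset.sup_le.2 hub) (Multiset.le_sup h)


def Phalf (m : ℕ) : Finset (Multiset ℕ) := if 2 ∣ m then Pm (m / 2) else ∅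

lemma card_Phalf (m : ℕ) : (Phalf m).card = if 2 ∣ m then (Pm (m / 2)).card else 0 := by
  rw [Phalf]; split_ifs <;> simp

lemma mem_oddPart_ne_zero {s : Multiset ℕ} (hs : ∀ x ∈ s, x ≠ 0) :
    ∀ x ∈ oddPart s, x ≠ 0 := by
  intro x hx
  apply hs
  rw [← recompose s, Multiset.mem_add]
  exact Or.inl hx

lemma mem_half_ne_zero {s : Multiset ℕ} (hs : ∀ x ∈ s, x ≠ 0) :
    ∀ x ∈ half s, x ≠ 0 := by
  intro x hx
  apply hs
  rw [← recompose s, Multiset.mem_add, Multiset.mem_add]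
  exact Or.inr (Or.inl hx)

/-- Key identity (Euler-type): p(n) = ∑ₖ q(k)·p((n-k)/2) over k with n-k even. -/
lemma Pm_card_eq (n : ℕ) :
    (Pm n).card = ∑ k ∈ Finset.range (n + 1),
      (Qm k).card * (if 2 ∣ (n - k) then (Pm ((n - k) / 2)).card else 0) := by
  have : (Pm n).card =
      ((Finset.range (n + 1)).sigma (fun k => Qm k ×ˢ Phalf (n - k))).card := by
    apply Finset.card_bij (fun s _ => (⟨(oddPart s).sum, (oddPart s, half s)⟩ :
      Σ _ : ℕ, Multiset ℕ × Multiset ℕ))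
    · intro s hs
      obtain ⟨hsum, hpos⟩ := mem_Pm.1 hs
      have hkey := sum_oddPart_add s
      rw [Finset.mem_sigma, Finset.mem_range, Finset.mem_product]
      dsimp only
      refine ⟨by omega, mem_Qm.2 ⟨rfl, mem_oddPart_ne_zero hpos, nodup_oddPart s⟩, ?_⟩
      have hdvd : 2 ∣ (n - (oddPart s).sum) := ⟨(half s).sum, by omega⟩
      rw [Phalf, if_pos hdvd]
      refine mem_Pm.2 ⟨?_, mem_half_ne_zero hpos⟩
      omega
    · intro s₁ h₁ s₂ h₂ heq
      have hsnd := congrArg (fun x : (Σ _ : ℕ, Multiset ℕ × Multiset ℕ) => x.snd) heq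
      simp only [Prod.mk.injEq] at hsnd
      have heq2 : oddPart s₁ = oddPart s₂ ∧ half s₁ = half s₂ := hsnd
      have heq : True ∧ (oddPart s₁ = oddPart s₂ ∧ half s₁ = half s₂) := ⟨trivial, heq2⟩
      calc s₁ = oddPart s₁ + (half s₁ + half s₁) := (recompose s₁).symm
        _ = oddPart s₂ + (half s₂ + half s₂) := by rw [heq.2.1, heq.2.2]
        _ = s₂ := recompose s₂
    · rintro ⟨k, σ, μ⟩ hb
      rw [Finset.mem_sigma, Finset.mem_range, Finset.mem_product] at hb
      dsimp only at hb
      obtain ⟨hk, hσ, hμ⟩ := hb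
      obtain ⟨hσsum, hσpos, hσnd⟩ := mem_Qm.1 hσ
      by_cases hdvd : 2 ∣ (n - k)
      swap
      · rw [Phalf, if_neg hdvd] at hμ; exact absurd hμ (Finset.notMem_empty _)
      rw [Phalf, if_pos hdvd] at hμ
      obtain ⟨hμsum, hμpos⟩ := mem_Pm.1 hμ
      refine ⟨σ + (μ + μ), ?_, ?_⟩
      · refine mem_Pm.2 ⟨?_, ?_⟩
        · rw [Multiset.sum_add, Multiset.sum_add, hσsum, hμsum]
          obtain ⟨c, hc⟩ := hdvd
          omega
        · intro x hx
          rw [Multiset.mem_add, Multiset.mem_add] at hx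
          rcases hx with h | h | h
          exacts [hσpos x h, hμpos x h, hμpos x h]
      · rw [oddPart_recomp σ μ hσnd, half_recomp σ μ hσnd, hσsum]
  rw [this, Finset.card_sigma]
  refine Finset.sum_congr rfl (fun k _ => ?_)
  rw [Finset.card_product, card_Phalf]


lemma even_sum_of_even (s : Multiset ℕ) (h : ∀ x ∈ s, Even x) : Even s.sum := by
  induction s using Multiset.induction with
  | empty => simp
  | cons a s ih =>
    rw [Multiset.sum_cons]
    exact (h a (Multiset.mem_cons_self _ _)).add
      (ih (fun x hx => h x (Multiset.mem_cons_of_mem hx)))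

lemma sum_map_two_mul (s : Multiset ℕ) : (s.map (fun x => 2 * x)).sum = 2 * s.sum := by
  induction s using Multiset.induction with
  | empty => simp
  | cons a s ih => simp [ih]; ring

/-- distinct-even partitions of k as a finset -/
def Em (k : ℕ) : Finset (Multiset ℕ) :=
  Finset.univ.image
    (fun ν : {ν : Nat.Partition k // ν.parts.Nodup ∧ ∀ x ∈ ν.parts, Even x} => ν.1.parts)

lemma mem_Em {k : ℕ} {s : Multiset ℕ} :
    s ∈ Em k ↔ s.sum = k ∧ (∀ x ∈ s, x ≠ 0) ∧ s.Nodup ∧ ∀ x ∈ s, Even x := by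
  constructor
  · rintro hs
    obtain ⟨⟨p, hp1, hp2⟩, _, rfl⟩ := Finset.mem_image.1 hs
    exact ⟨p.parts_sum, fun x hx => (p.parts_pos hx).ne', hp1, hp2⟩
  · rintro ⟨h1, h2, h3, h4⟩
    exact Finset.mem_image.2 ⟨⟨⟨s, fun {x} hx => Nat.pos_of_ne_zero (h2 x hx), h1⟩, h3, h4⟩,
      Finset.mem_univ _, rfl⟩

lemma card_Em (k : ℕ) :
    Fintype.card {ν : Nat.Partition k // ν.parts.Nodup ∧ ∀ x ∈ ν.parts, Even x}
      = (Em k).card := by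
  rw [Em, Finset.card_image_of_injective _ (fun a b h => Subtype.ext (Nat.Partition.ext h)),
    Finset.card_univ]

lemma card_Em_eq (k : ℕ) :
    (Em k).card = if 2 ∣ k then (Qm (k / 2)).card else 0 := by
  by_cases hk : 2 ∣ k
  · rw [if_pos hk]
    symm
    apply Finset.card_bij (fun σ _ => σ.map (fun x => 2 * x))
    · intro σ hσ
      obtain ⟨h1, h2, h3⟩ := mem_Qm.1 hσ
      refine mem_Em.2 ⟨?_, ?_, ?_, ?_⟩
      · rw [sum_map_two_mul, h1]; omega
      · intro x hx
        obtain ⟨a, ha, rfl⟩ := Multiset.mem_map.1 hx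
        exact fun h => (h2 a ha) (by omega)
      · exact h3.map (fun a b h => by omega)
      · intro x hx
        obtain ⟨a, _, rfl⟩ := Multiset.mem_map.1 hx
        exact ⟨a, by ring⟩
    · intro a _ b _ h
      exact Multiset.map_injective (fun x y h => by omega) h
    · intro s hs
      obtain ⟨h1, h2, h3, h4⟩ := mem_Em.1 hs
      have hmap : (s.map (fun x => x / 2)).map (fun x => 2 * x) = s := by
        rw [Multiset.map_map]
        rw [Multiset.map_congr rfl (fun x hx => ?_)]
        · exact Multiset.map_id s
        · obtain ⟨c, hc⟩ := h4 x hx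
          simp only [Function.comp_apply, id_eq]
          omega
      refine ⟨s.map (fun x => x / 2), mem_Qm.2 ⟨?_, ?_, ?_⟩, hmap⟩
      · have := sum_map_two_mul (s.map (fun x => x / 2))
        rw [hmap] at this
        omega
      · intro x hx
        obtain ⟨a, ha, rfl⟩ := Multiset.mem_map.1 hx
        obtain ⟨c, hc⟩ := h4 a ha
        have := h2 a ha
        omega
      · refine Multiset.Nodup.map_on (fun x hx y hy h => ?_) h3
        obtain ⟨c, hc⟩ := h4 x hx
        obtain ⟨d, hd⟩ := h4 y hy
        omega
  · rw [if_neg hk]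
    rw [Finset.card_eq_zero, Finset.eq_empty_iff_forall_notMem]
    intro s hs
    obtain ⟨h1, _, _, h4⟩ := mem_Em.1 hs
    obtain ⟨c, hc⟩ := even_sum_of_even s h4
    omega

lemma d2_eq (n : ℕ) :
    d2 n = ∑ m ∈ Finset.range (n + 1),
      (Pm m).card * (if 2 ∣ (n - m) then (Qm ((n - m) / 2)).card else 0) := by
  rw [d2]
  refine Finset.sum_congr rfl (fun m _ => ?_)
  rw [card_Pm, card_Em, card_Em_eq]


/-! ### The Bressoud–Zeilberger involution -/

def Pall (n : ℕ) : Finset (Multiset ℕ) := (Finset.range (n + 1)).biUnion Pm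

noncomputable def B (n : ℕ) : Finset (ℤ × Multiset ℕ) :=
  ((Finset.Icc (-(n : ℤ)) n) ×ˢ Pall n).filter (fun p => (p.2.sum : ℤ) + gp p.1 = n)

lemma mem_B {n : ℕ} {j : ℤ} {s : Multiset ℕ} :
    (j, s) ∈ B n ↔ (s.sum : ℤ) + gp j = n ∧ ∀ x ∈ s, x ≠ 0 := by
  rw [B, Finset.mem_filter, Finset.mem_product]
  constructor
  · rintro ⟨⟨h1, h2⟩, h3⟩
    refine ⟨h3, ?_⟩
    rw [Pall, Finset.mem_biUnion] at h2
    obtain ⟨a, _, h5⟩ := h2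
    exact (mem_Pm.1 h5).2
  · rintro ⟨h1, h2⟩
    have hg := gp_nonneg j
    have habs := abs_le_gp j
    have hsum : (s.sum : ℤ) ≤ n := by omega
    refine ⟨⟨?_, ?_⟩, h1⟩
    · rw [Finset.mem_Icc]
      constructor <;> [skip; skip] <;> · rw [abs_le] at habs; omega
    · rw [Pall, Finset.mem_biUnion]
      exact ⟨s.sum, Finset.mem_range.2 (by omega), mem_Pm.2 ⟨rfl, h2⟩⟩

def phi (p : ℤ × Multiset ℕ) : ℤ × Multiset ℕ :=
  if p.2 = 0 then
    if 1 ≤ p.1 then (p.1 - 1, {(3 * p.1 - 1).toNat})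
    else (p.1 + 1, Multiset.replicate (-3 * p.1 - 2).toNat 1)
  else
    if (p.2.sup : ℤ) ≤ (Multiset.card p.2 : ℤ) + 3 * p.1 then
      (p.1 - 1, dec p.2 + (if (Multiset.card p.2 : ℤ) + 3 * p.1 = 1 then 0
        else {((Multiset.card p.2 : ℤ) + 3 * p.1 - 1).toNat}))
    else
      (p.1 + 1, inc (p.2.erase p.2.sup) +
        Multiset.replicate ((p.2.sup : ℤ) - (Multiset.card p.2 : ℤ) - 3 * p.1 - 1).toNat 1)

lemma phi_empty_pos {j : ℤ} (h : 1 ≤ j) :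
    phi (j, (0 : Multiset ℕ)) = (j - 1, {(3 * j - 1).toNat}) := by
  rw [phi, if_pos rfl, if_pos h]

lemma phi_empty_neg {j : ℤ} (h : ¬ 1 ≤ j) :
    phi (j, (0 : Multiset ℕ)) = (j + 1, Multiset.replicate (-3 * j - 2).toNat 1) := by
  rw [phi, if_pos rfl, if_neg h]

lemma phi_A {j : ℤ} {s : Multiset ℕ} (hs : s ≠ 0)
    (hc : (s.sup : ℤ) ≤ (Multiset.card s : ℤ) + 3 * j) :
    phi (j, s) = (j - 1, dec s + (if (Multiset.card s : ℤ) + 3 * j = 1 then 0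
        else {((Multiset.card s : ℤ) + 3 * j - 1).toNat})) := by
  rw [phi, if_neg hs, if_pos hc]

lemma phi_B {j : ℤ} {s : Multiset ℕ} (hs : s ≠ 0)
    (hc : ¬ (s.sup : ℤ) ≤ (Multiset.card s : ℤ) + 3 * j) :
    phi (j, s) = (j + 1, inc (s.erase s.sup) +
        Multiset.replicate ((s.sup : ℤ) - (Multiset.card s : ℤ) - 3 * j - 1).toNat 1) := by
  rw [phi, if_neg hs, if_neg hc]

lemma phi_ne (p : ℤ × Multiset ℕ) : phi p ≠ p := by
  intro h
  have := congrArg Prod.fst h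
  rw [phi] at this
  split_ifs at this <;> simp at this <;> omega


-- facts about a nonempty positive multiset
lemma sum_erase_sup (s : Multiset ℕ) (hs : s ≠ 0) :
    (s.erase s.sup).sum + s.sup = s.sum := by
  conv_rhs => rw [← Multiset.cons_erase (sup_mem s hs)]
  rw [Multiset.sum_cons]; ring

lemma card_erase_sup (s : Multiset ℕ) (hs : s ≠ 0) :
    Multiset.card (s.erase s.sup) + 1 = Multiset.card s := by
  rw [Multiset.card_erase_of_mem (sup_mem s hs)]
  have h0 : Multiset.card s ≠ 0 := by
    simp only [ne_eq, Multiset.card_eq_zero]; exact hs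
  have := Nat.succ_pred_eq_of_pos (Nat.pos_of_ne_zero h0)
  omega

lemma sup_ne_zero {s : Multiset ℕ} (hs : s ≠ 0) (hpos : ∀ x ∈ s, x ≠ 0) : s.sup ≠ 0 :=
  hpos _ (sup_mem s hs)

lemma mem_B_of {n : ℕ} {j : ℤ} {s : Multiset ℕ}
    (h1 : (s.sum : ℤ) + gp j = n) (h2 : ∀ x ∈ s, x ≠ 0) : (j, s) ∈ B n :=
  mem_B.2 ⟨h1, h2⟩

lemma phi_mem {n : ℕ} (hn : 1 ≤ n) {p : ℤ × Multiset ℕ} (hp : p ∈ B n) :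
    phi p ∈ B n := by
  obtain ⟨j, s⟩ := p
  obtain ⟨hsum, hpos⟩ := mem_B.1 hp
  by_cases hs : s = 0
  · subst hs
    simp only [Multiset.sum_zero, Nat.cast_zero, zero_add] at hsum
    by_cases hj : 1 ≤ j
    · rw [phi_empty_pos hj]
      apply mem_B_of
      · have hc : ((3 * j - 1).toNat : ℤ) = 3 * j - 1 := Int.toNat_of_nonneg (by omega)
        rw [Multiset.sum_singleton, gp_sub_one]
        push_cast [hc]
        omega
      · intro x hx
        rw [Multiset.mem_singleton] at hx
        subst hx
        omega
    · have hj0 : j ≠ 0 := by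
        intro h; rw [h, gp_zero] at hsum; omega
      have hj' : j ≤ -1 := by omega
      rw [phi_empty_neg hj]
      apply mem_B_of
      · have hc : ((-3 * j - 2).toNat : ℤ) = -3 * j - 2 := Int.toNat_of_nonneg (by omega)
        rw [Multiset.sum_replicate, gp_add_one, smul_eq_mul, mul_one]
        omega
      · intro x hx
        rw [Multiset.eq_of_mem_replicate hx]
        omega
  · have hM : s.sup ∈ s := sup_mem s hs
    have hM0 : s.sup ≠ 0 := hpos _ hM
    have hcardpos : (0 : ℤ) < Multiset.card s := by
      have : Multiset.card s ≠ 0 := by simpa [Multiset.card_eq_zero] using hs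
      omega
    have hcs := card_le_sum s hpos
    by_cases hc : (s.sup : ℤ) ≤ (Multiset.card s : ℤ) + 3 * j
    · rw [phi_A hs hc]
      by_cases h1 : (Multiset.card s : ℤ) + 3 * j = 1
      · -- all parts are 1
        have hall : ∀ x ∈ s, x = 1 := by
          intro x hx
          have hxM := Multiset.le_sup hx
          have := hpos x hx
          omega
        have hrep : s = Multiset.replicate (Multiset.card s) 1 :=
          (Multiset.eq_replicate_card).2 hall
        rw [if_pos h1, add_zero]
        apply mem_B_of
        · rw [hrep, dec_replicate_one]
          have hsum1 : s.sum = Multiset.card s := by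
            rw [hrep, Multiset.sum_replicate, smul_eq_mul, mul_one,
              Multiset.card_replicate]
          rw [Multiset.sum_zero, gp_sub_one]
          push_cast
          rw [hsum1] at hsum
          omega
        · intro x hx
          exact mem_dec hx
      · rw [if_neg h1]
        apply mem_B_of
        · have hc2 : (((Multiset.card s : ℤ) + 3 * j - 1).toNat : ℤ)
              = (Multiset.card s : ℤ) + 3 * j - 1 := by
            apply Int.toNat_of_nonneg
            have : (1 : ℤ) ≤ s.sup := by
              have : s.sup ≠ 0 := hM0
              omega
            omega
          rw [Multiset.sum_add, Multiset.sum_singleton, sum_dec s hpos, gp_sub_one]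
          push_cast [hc2]
          omega
        · intro x hx
          rw [Multiset.mem_add] at hx
          rcases hx with h | h
          · exact mem_dec h
          · rw [Multiset.mem_singleton] at h
            subst h
            intro hcon
            rw [← Nat.cast_inj (R := ℤ)] at hcon
            push_cast at hcon
            omega
    · rw [phi_B hs hc]
      apply mem_B_of
      · have hk : (((s.sup : ℤ) - (Multiset.card s : ℤ) - 3 * j - 1).toNat : ℤ)
            = (s.sup : ℤ) - (Multiset.card s : ℤ) - 3 * j - 1 :=
          Int.toNat_of_nonneg (by omega)
        have he1 := sum_erase_sup s hs
        have he2 := card_erase_sup s hs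
        rw [Multiset.sum_add, Multiset.sum_replicate, sum_inc, gp_add_one,
          smul_eq_mul, mul_one, Nat.cast_add, Nat.cast_add]
        omega
      · intro x hx
        rw [Multiset.mem_add] at hx
        rcases hx with h | h
        · exact mem_inc_ne_zero h
        · rw [Multiset.eq_of_mem_replicate h]
          omega


lemma inc_zero : inc 0 = 0 := rfl

lemma inc_eq_zero {s : Multiset ℕ} (h : inc s = 0) : s = 0 := by
  rwa [inc, Multiset.map_eq_zero] at h

lemma card_inc (s : Multiset ℕ) : Multiset.card (inc s) = Multiset.card s := by
  rw [inc, Multiset.card_map]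

lemma phi_invol {n : ℕ} (hn : 1 ≤ n) {p : ℤ × Multiset ℕ} (hp : p ∈ B n) :
    phi (phi p) = p := by
  obtain ⟨j, s⟩ := p
  obtain ⟨hsum, hpos⟩ := mem_B.1 hp
  by_cases hs : s = 0
  · subst hs
    simp only [Multiset.sum_zero, Nat.cast_zero, zero_add] at hsum
    by_cases hj : 1 ≤ j
    · rw [phi_empty_pos hj]
      have hc : ((3 * j - 1).toNat : ℤ) = 3 * j - 1 := Int.toNat_of_nonneg (by omega)
      set c := (3 * j - 1).toNat with hcdef
      have hcne : ({c} : Multiset ℕ) ≠ 0 := by simp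
      have hsup : ({c} : Multiset ℕ).sup = c := by
        apply sup_eq_of (Multiset.mem_singleton_self c)
        intro x hx; rw [Multiset.mem_singleton] at hx; omega
      have hcard : (Multiset.card ({c} : Multiset ℕ) : ℤ) = 1 := by simp
      have hcond : ¬ ((({c} : Multiset ℕ).sup : ℤ) ≤
          (Multiset.card ({c} : Multiset ℕ) : ℤ) + 3 * (j - 1)) := by
        rw [hsup, hcard]; omega
      rw [phi_B hcne hcond, hsup]
      have h1 : ({c} : Multiset ℕ).erase c = 0 := Multiset.erase_singleton c
      have h2 : ((c : ℤ) - (Multiset.card ({c} : Multiset ℕ) : ℤ) - 3 * (j - 1) - 1) = 0 := by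
        rw [hcard]; omega
      rw [h1, h2, inc_zero]
      simp only [Int.toNat_zero, Multiset.replicate_zero, add_zero]
      rw [Prod.mk.injEq]
      exact ⟨by omega, rfl⟩
    · have hj0 : j ≠ 0 := fun h => by rw [h, gp_zero] at hsum; omega
      have hj' : j ≤ -1 := by omega
      rw [phi_empty_neg hj]
      have hk : ((-3 * j - 2).toNat : ℤ) = -3 * j - 2 := Int.toNat_of_nonneg (by omega)
      set k := (-3 * j - 2).toNat with hkdef
      have hkpos : k ≠ 0 := by omega
      have hne : Multiset.replicate k 1 ≠ 0 := by
        intro h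
        have := congrArg Multiset.card h
        rw [Multiset.card_replicate, Multiset.card_zero] at this
        exact hkpos this
      have hsup : (Multiset.replicate k (1:ℕ)).sup = 1 := by
        apply sup_eq_of (Multiset.mem_replicate.2 ⟨hkpos, rfl⟩)
        intro x hx; rw [Multiset.eq_of_mem_replicate hx]
      have hcard : (Multiset.card (Multiset.replicate k (1:ℕ)) : ℤ) = k := by simp
      have hcond : ((Multiset.replicate k (1:ℕ)).sup : ℤ) ≤
          (Multiset.card (Multiset.replicate k (1:ℕ)) : ℤ) + 3 * (j + 1) := by
        rw [hsup, hcard]; omega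
      rw [phi_A hne hcond]
      have h1 : (Multiset.card (Multiset.replicate k (1:ℕ)) : ℤ) + 3 * (j + 1) = 1 := by
        rw [hcard]; omega
      rw [if_pos h1, dec_replicate_one, add_zero, Prod.mk.injEq]
      exact ⟨by omega, rfl⟩
  · have hM : s.sup ∈ s := sup_mem s hs
    have hM0 : s.sup ≠ 0 := hpos _ hM
    have hcardpos : Multiset.card s ≠ 0 := by simpa [Multiset.card_eq_zero] using hs
    by_cases hc : (s.sup : ℤ) ≤ (Multiset.card s : ℤ) + 3 * j
    · rw [phi_A hs hc]
      by_cases h1 : (Multiset.card s : ℤ) + 3 * j = 1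
      · have hall : ∀ x ∈ s, x = 1 := by
          intro x hx
          have hxM := Multiset.le_sup hx
          have := hpos x hx
          omega
        have hrep : s = Multiset.replicate (Multiset.card s) 1 :=
          (Multiset.eq_replicate_card).2 hall
        rw [if_pos h1, add_zero, show dec s = 0 by rw [hrep, dec_replicate_one]]
        have hj1 : ¬ (1 ≤ j - 1) := by omega
        rw [phi_empty_neg hj1, Prod.mk.injEq]
        refine ⟨by omega, ?_⟩
        have : (-3 * (j - 1) - 2).toNat = Multiset.card s := by omega
        rw [this]
        exact hrep.symm
      · rw [if_neg h1]
        have hcge : (((Multiset.card s : ℤ) + 3 * j - 1).toNat : ℤ)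
            = (Multiset.card s : ℤ) + 3 * j - 1 := Int.toNat_of_nonneg (by omega)
        set c := ((Multiset.card s : ℤ) + 3 * j - 1).toNat with hcdef
        set s' := dec s + ({c} : Multiset ℕ) with hs'def
        have hcmem : c ∈ s' := Multiset.mem_add.2 (Or.inr (Multiset.mem_singleton_self c))
        have hs'ne : s' ≠ 0 := fun h => by rw [h] at hcmem; simp at hcmem
        have hub : ∀ x ∈ s', x ≤ c := by
          intro x hx
          rcases Multiset.mem_add.1 hx with h | h
          · rw [dec, Multiset.mem_filter, Multiset.mem_map] at h
            obtain ⟨⟨a, ha, rfl⟩, -⟩ := h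
            have h3 := Multiset.le_sup ha
            omega
          · rw [Multiset.mem_singleton] at h; omega
        have hsup : s'.sup = c := sup_eq_of hcmem hub
        -- count u and w
        have hu : Multiset.card (dec s) = Multiset.card (s.filter (2 ≤ ·)) := by
          rw [← card_inc, inc_dec s hpos]
        have hw : Multiset.card (s.filter (2 ≤ ·))
            + Multiset.card (s.filter (fun x => ¬ (2 ≤ x))) = Multiset.card s := by
          rw [← Multiset.card_add, Multiset.filter_add_not]
        set w := Multiset.card (s.filter (fun x => ¬ (2 ≤ x))) with hwdef
        have hcard' : Multiset.card s' = Multiset.card (dec s) + 1 := by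
          rw [hs'def, Multiset.card_add, Multiset.card_singleton]
        have hcond : ¬ ((s'.sup : ℤ) ≤ (Multiset.card s' : ℤ) + 3 * (j - 1)) := by
          rw [hsup, hcard']
          push_cast
          omega
        rw [phi_B hs'ne hcond, hsup, Prod.mk.injEq]
        refine ⟨by omega, ?_⟩
        have herase : s'.erase c = dec s := by
          rw [hs'def, add_comm, Multiset.singleton_add, Multiset.erase_cons_head]
        rw [herase]
        have hK : ((c : ℤ) - (Multiset.card s' : ℤ) - 3 * (j - 1) - 1).toNat = w := by
          rw [hcard']
          push_cast
          omega
        rw [hK, inc_dec s hpos]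
        have hrepw : Multiset.replicate w (1:ℕ) = s.filter (fun x => ¬ (2 ≤ x)) := by
          symm
          rw [hwdef]
          apply (Multiset.eq_replicate_card).2
          intro b hb
          rw [Multiset.mem_filter] at hb
          have := hpos b hb.1
          have := hb.2
          omega
        rw [hrepw]
        exact Multiset.filter_add_not _ s
    · rw [phi_B hs hc]
      have hkge : (((s.sup : ℤ) - (Multiset.card s : ℤ) - 3 * j - 1).toNat : ℤ)
          = (s.sup : ℤ) - (Multiset.card s : ℤ) - 3 * j - 1 := Int.toNat_of_nonneg (by omega)
      set k := ((s.sup : ℤ) - (Multiset.card s : ℤ) - 3 * j - 1).toNat with hkdef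
      set s' := inc (s.erase s.sup) + Multiset.replicate k 1 with hs'def
      have hcard' : Multiset.card s' = (Multiset.card s - 1) + k := by
        rw [hs'def, Multiset.card_add, card_inc, Multiset.card_replicate,
          Multiset.card_erase_of_mem hM]
        rfl
      have herasepos : ∀ x ∈ s.erase s.sup, x ≠ 0 :=
        fun x hx => hpos x (Multiset.mem_of_mem_erase hx)
      by_cases hz : s' = 0
      · -- s = {sup}, k = 0
        have hzc := congrArg Multiset.card hz
        rw [hs'def, Multiset.card_add, card_inc, Multiset.card_replicate,
          Multiset.card_zero] at hzc
        have hz5 : s.erase s.sup = 0 := by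
          rw [← Multiset.card_eq_zero]; omega
        have hz6 : k = 0 := by omega
        have hsin : s = {s.sup} := by
          have h7 := Multiset.cons_erase hM
          rw [hz5, Multiset.cons_zero] at h7
          exact h7.symm
        have hcard1 : Multiset.card s = 1 := by
          have := congrArg Multiset.card hsin
          rwa [Multiset.card_singleton] at this
        have hMval : (s.sup : ℤ) = 3 * j + 2 := by
          rw [hcard1] at hkge
          omega
        have hj0 : 1 ≤ j + 1 := by
          have : (1 : ℤ) ≤ s.sup := by omega
          omega
        rw [hz, phi_empty_pos hj0, Prod.mk.injEq]
        refine ⟨by omega, ?_⟩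
        have h8 : (3 * (j + 1) - 1).toNat = s.sup := by omega
        rw [h8]
        exact hsin.symm
      · have hub : ∀ x ∈ s', x ≤ s.sup + 1 := by
          intro x hx
          rcases Multiset.mem_add.1 hx with h | h
          · rw [inc, Multiset.mem_map] at h
            obtain ⟨a, ha, rfl⟩ := h
            have := Multiset.le_sup (Multiset.mem_of_mem_erase ha)
            omega
          · rw [Multiset.eq_of_mem_replicate h]
            omega
        have hsuple : s'.sup ≤ s.sup + 1 := Multiset.sup_le.2 hub
        have hcondA : ((s'.sup : ℤ)) ≤ (Multiset.card s' : ℤ) + 3 * (j + 1) := by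
          have h2 : (Multiset.card s' : ℤ) = (Multiset.card s : ℤ) - 1 + k := by
            rw [hcard']
            have : 1 ≤ Multiset.card s := Nat.pos_of_ne_zero hcardpos
            push_cast [Nat.cast_sub this]
            ring
          rw [h2]
          have h3 : ((s'.sup : ℤ)) ≤ (s.sup : ℤ) + 1 := by exact_mod_cast hsuple
          omega
        rw [phi_A hz hcondA]
        have hnot1 : ¬ ((Multiset.card s' : ℤ) + 3 * (j + 1) = 1) := by
          have h2 : (Multiset.card s' : ℤ) = (Multiset.card s : ℤ) - 1 + k := by
            rw [hcard']
            have : 1 ≤ Multiset.card s := Nat.pos_of_ne_zero hcardpos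
            push_cast [Nat.cast_sub this]
            ring
          have : (1 : ℤ) ≤ s.sup := by
            have := Nat.pos_of_ne_zero hM0; omega
          rw [h2]
          omega
        rw [if_neg hnot1, Prod.mk.injEq]
        refine ⟨by omega, ?_⟩
        have hC : ((Multiset.card s' : ℤ) + 3 * (j + 1) - 1).toNat = s.sup := by
          have h2 : (Multiset.card s' : ℤ) = (Multiset.card s : ℤ) - 1 + k := by
            rw [hcard']
            have : 1 ≤ Multiset.card s := Nat.pos_of_ne_zero hcardpos
            push_cast [Nat.cast_sub this]
            ring
          rw [h2]
          omega
        rw [hC]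
        have hdec : dec s' = s.erase s.sup := by
          rw [hs'def, dec_add, dec_inc _ herasepos, dec_replicate_one, add_zero]
        rw [hdec, add_comm, Multiset.singleton_add, Multiset.cons_erase hM]


def IsPent (i : ℕ) : Prop := ∃ m : ℤ, (i : ℤ) = m * (3 * m + 1) / 2

lemma isPent_iff_gp (i : ℕ) : IsPent i ↔ ∃ m : ℤ, gp m = i := by
  unfold IsPent gp
  constructor
  · rintro ⟨m, hm⟩; exact ⟨m, hm.symm⟩
  · rintro ⟨m, hm⟩; exact ⟨m, hm.symm⟩

open scoped Classical

noncomputable def Iset (i : ℕ) : Finset ℤ :=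
  (Finset.Icc (-(i : ℤ)) i).filter (fun j => gp j = i)

lemma mem_Iset {i : ℕ} {j : ℤ} : j ∈ Iset i ↔ gp j = i := by
  rw [Iset, Finset.mem_filter, Finset.mem_Icc]
  constructor
  · rintro ⟨-, h⟩; exact h
  · intro h
    have h2 := abs_le_gp j
    rw [h, abs_le] at h2
    exact ⟨h2, h⟩

open Classical in
lemma card_Iset (i : ℕ) : (Iset i).card = if IsPent i then 1 else 0 := by
  by_cases h : IsPent i
  · rw [if_pos h]
    obtain ⟨m, hm⟩ := (isPent_iff_gp i).1 h
    rw [show Iset i = {m} from ?_, Finset.card_singleton]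
    ext j
    rw [mem_Iset, Finset.mem_singleton]
    constructor
    · intro hj; exact gp_inj (hj.trans hm.symm)
    · rintro rfl; exact hm
  · rw [if_neg h, Finset.card_eq_zero, Finset.eq_empty_iff_forall_notMem]
    intro j hj
    exact h ((isPent_iff_gp i).2 ⟨j, mem_Iset.1 hj⟩)

open Classical in
lemma card_B (n : ℕ) :
    (B n).card = ∑ i ∈ Finset.range (n + 1), (if IsPent i then 1 else 0) * (Pm (n - i)).card := by
  have : (B n).card = ((Finset.range (n + 1)).sigma (fun i => Iset i ×ˢ Pm (n - i))).card := by
    apply Finset.card_bij (fun p _ => (⟨(gp p.1).toNat, (p.1, p.2)⟩ :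
      Σ _ : ℕ, ℤ × Multiset ℕ))
    · rintro ⟨j, s⟩ hp
      obtain ⟨h1, h2⟩ := mem_B.1 hp
      have hg := gp_nonneg j
      have htn : ((gp j).toNat : ℤ) = gp j := Int.toNat_of_nonneg hg
      rw [Finset.mem_sigma, Finset.mem_range, Finset.mem_product]
      dsimp only
      refine ⟨by omega, mem_Iset.2 (by omega), mem_Pm.2 ⟨?_, h2⟩⟩
      omega
    · rintro ⟨j₁, s₁⟩ h₁ ⟨j₂, s₂⟩ h₂ heq
      have := congrArg (fun x : (Σ _ : ℕ, ℤ × Multiset ℕ) => x.snd) heq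
      simpa using this
    · rintro ⟨i, j, s⟩ hb
      rw [Finset.mem_sigma, Finset.mem_range, Finset.mem_product] at hb
      dsimp only at hb
      obtain ⟨hi, hj, hs⟩ := hb
      have hgp : gp j = i := mem_Iset.1 hj
      obtain ⟨hsum, hpos⟩ := mem_Pm.1 hs
      refine ⟨(j, s), mem_B_of ?_ hpos, ?_⟩
      · rw [hsum, hgp]
        push_cast
        omega
      · dsimp only
        rw [hgp]
        simp
  rw [this, Finset.card_sigma]
  refine Finset.sum_congr rfl (fun i _ => ?_)
  rw [Finset.card_product, card_Iset]

lemma B_zero : B 0 = {((0 : ℤ), (0 : Multiset ℕ))} := by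
  ext ⟨j, s⟩
  rw [Finset.mem_singleton, Prod.mk.injEq]
  constructor
  · intro h
    obtain ⟨h1, h2⟩ := mem_B.1 h
    have hg := gp_nonneg j
    have hs0 : s.sum = 0 := by omega
    have hj0 : gp j = 0 := by omega
    have habs := abs_le_gp j
    constructor
    · rw [hj0] at habs
      have := abs_nonneg j
      rw [← abs_eq_zero]
      omega
    · rcases eq_or_ne s 0 with h | h
      · exact h
      · exfalso
        obtain ⟨x, hx⟩ := Multiset.exists_mem_of_ne_zero h
        have := h2 x hx
        have := Multiset.single_le_sum (fun y _ => Nat.zero_le y) x hx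
        omega
  · rintro ⟨rfl, rfl⟩
    apply mem_B_of
    · simp [gp_zero]
    · intro x hx; simp at hx

lemma card_B_parity (n : ℕ) :
    ((B n).card : ZMod 2) = if n = 0 then 1 else 0 := by
  rcases Nat.eq_zero_or_pos n with rfl | hn
  · rw [B_zero, if_pos rfl, Finset.card_singleton, Nat.cast_one]
  · rw [if_neg (by omega)]
    have hsum : ∑ _p ∈ B n, (1 : ZMod 2) = 0 := by
      apply Finset.sum_involution (fun p _ => phi p)
      · intro a ha; decide
      · intro a ha h
        exact phi_ne a
      · intro a ha; exact phi_mem hn ha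
      · intro a ha; exact phi_invol hn ha
    rw [Finset.sum_const, nsmul_eq_mul, mul_one] at hsum
    exact hsum

open Classical in
lemma card_B_combined (n : ℕ) :
    ((∑ i ∈ Finset.range (n + 1), (if IsPent i then 1 else 0) * (Pm (n - i)).card : ℕ) : ZMod 2)
      = if n = 0 then 1 else 0 := by
  rw [← card_B n, card_B_parity]

noncomputable def Pps : PowerSeries (ZMod 2) := PowerSeries.mk fun n => ((Pm n).card : ZMod 2)
noncomputable def Qps : PowerSeries (ZMod 2) := PowerSeries.mk fun n => ((Qm n).card : ZMod 2)
noncomputable def Gps : PowerSeries (ZMod 2) :=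
  PowerSeries.mk fun n => if IsPent n then 1 else 0

lemma sq_eq (F : PowerSeries (ZMod 2)) :
    F * F = PowerSeries.mk fun n =>
      if 2 ∣ n then PowerSeries.coeff (n / 2) F else 0 := by
  ext n
  rw [PowerSeries.coeff_mk, PowerSeries.coeff_mul]
  rw [← Finset.sum_filter_add_sum_filter_not (Finset.HasAntidiagonal.antidiagonal n) (fun p => p.1 = p.2)]
  have h2 : ∑ p ∈ (Finset.HasAntidiagonal.antidiagonal n).filter (fun p => ¬ p.1 = p.2),
      PowerSeries.coeff p.1 F * PowerSeries.coeff p.2 F = 0 := by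
    apply Finset.sum_involution (fun p _ => p.swap)
    · intro a ha
      dsimp
      rw [mul_comm]
      exact CharTwo.add_self_eq_zero _
    · intro a ha h
      rw [Finset.mem_filter] at ha
      intro hsw
      apply ha.2
      have := congrArg Prod.fst hsw
      simpa using this.symm
    · intro a ha
      exact Prod.swap_swap a
    · intro a ha
      rw [Finset.mem_filter, Finset.HasAntidiagonal.mem_antidiagonal] at ha ⊢
      dsimp
      refine ⟨by omega, fun h => ha.2 (by omega)⟩
  rw [h2, add_zero]
  by_cases hdvd : 2 ∣ n
  · have hset : (Finset.HasAntidiagonal.antidiagonal n).filter (fun p => p.1 = p.2) = {(n / 2, n / 2)} := by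
      ext ⟨a, b⟩
      rw [Finset.mem_filter, Finset.HasAntidiagonal.mem_antidiagonal, Finset.mem_singleton, Prod.mk.injEq]
      dsimp
      omega
    rw [hset, if_pos hdvd, Finset.sum_singleton]
    dsimp
    have hmul : ∀ a : ZMod 2, a * a = a := by decide
    exact hmul _
  · have hset : (Finset.HasAntidiagonal.antidiagonal n).filter (fun p => p.1 = p.2) = ∅ := by
      ext ⟨a, b⟩
      rw [Finset.mem_filter, Finset.HasAntidiagonal.mem_antidiagonal]
      simp only [Finset.notMem_empty, iff_false]
      omega
    rw [hset, if_neg hdvd, Finset.sum_empty]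

lemma L_P : Pps = Qps * (Pps * Pps) := by
  ext n
  rw [sq_eq Pps]
  simp only [Pps, Qps, PowerSeries.coeff_mk, PowerSeries.coeff_mul]
  rw [Finset.Nat.sum_antidiagonal_eq_sum_range_succ_mk, Pm_card_eq n]
  push_cast
  rfl

noncomputable def Dps : PowerSeries (ZMod 2) := PowerSeries.mk fun n => ((d2 n : ZMod 2))

lemma L_D : Dps = Pps * (Qps * Qps) := by
  ext n
  rw [sq_eq Qps]
  simp only [Dps, Pps, Qps, PowerSeries.coeff_mk, PowerSeries.coeff_mul]
  rw [Finset.Nat.sum_antidiagonal_eq_sum_range_succ_mk, d2_eq n]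
  push_cast
  rfl

lemma L_G : Gps * Pps = 1 := by
  ext n
  simp only [Gps, Pps, PowerSeries.coeff_mk, PowerSeries.coeff_mul, PowerSeries.coeff_one]
  rw [Finset.Nat.sum_antidiagonal_eq_sum_range_succ_mk, ← card_B_combined n]
  push_cast
  rfl

lemma D_eq_G : Dps = Gps := by
  have hQP : Qps * Pps = 1 := by
    have h1 : Gps * (Qps * (Pps * Pps)) = (Qps * Pps) * (Gps * Pps) := by ring
    have h2 : Gps * Pps = 1 := L_G
    calc Qps * Pps = (Qps * Pps) * (Gps * Pps) := by rw [h2, mul_one]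
      _ = Gps * (Qps * (Pps * Pps)) := h1.symm
      _ = Gps * Pps := by rw [← L_P]
      _ = 1 := h2
  have hQG : Qps = Gps := by
    calc Qps = Qps * (Gps * Pps) := by rw [L_G, mul_one]
      _ = (Qps * Pps) * Gps := by ring
      _ = Gps := by rw [hQP, one_mul]
  calc Dps = Pps * (Qps * Qps) := L_D
    _ = (Qps * Pps) * Qps := by ring
    _ = Qps := by rw [hQP, one_mul]
    _ = Gps := hQG

lemma d2_cast (n : ℕ) : ((d2 n : ZMod 2)) = if IsPent n then 1 else 0 := by
  have := congrArg (PowerSeries.coeff n) D_eq_G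
  rwa [Dps, Gps, PowerSeries.coeff_mk, PowerSeries.coeff_mk] at this

theorem d2_parity' (n : ℕ) :
    (Odd (d2 n) ↔ ∃ m : ℤ, (n : ℤ) = m * (3 * m + 1) / 2) := by
  have h := d2_cast n
  have hmod : ((d2 n : ZMod 2)) = (((d2 n) % 2 : ℕ) : ZMod 2) := by
    rw [ZMod.natCast_mod]
  rw [Nat.odd_iff]
  by_cases hp : IsPent n
  · rw [if_pos hp] at h
    constructor
    · intro _; exact hp
    · intro _
      rcases Nat.mod_two_eq_zero_or_one (d2 n) with h0 | h0
      · rw [hmod, h0] at h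
        exact absurd h.symm one_ne_zero
      · exact h0
  · rw [if_neg hp] at h
    constructor
    · intro h1
      rw [hmod, h1] at h
      exact absurd h one_ne_zero
    · intro hx
      exact absurd hx hp

end D2P

/-- `d_2(n)` is odd exactly when `n` is a generalized pentagonal number
`m(3m+1)/2` for some integer `m`, and even otherwise. -/
theorem d2_parity (n : ℕ) :
    (Odd (d2 n) ↔ ∃ m : ℤ, (n : ℤ) = m * (3 * m + 1) / 2) :=
  D2P.d2_parity' n
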